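/- arXiv:0808.2382 — 2 statements merged into one kernel-verified Lean document; each statement's English description precedes it below -/
import Mathlib

section
/- Let $n \ge 1$, let $f: \mathbb{Z}_2^n \to \{0,1\}$ be a Boolean function, and let $\psi_t = \exp(-itB)\delta_{(0,0_n)}$ be the continuous-time quantum walk on the bunkbed graph $\mathcal{B}_n(A_f)$ with $P_t(v) = |\psi_t(v)|^2$. Then for every $t \in \mathbb{R}$, the difference between the total probability on the two decks satisfies $\sum_{x \in \mathbb{Z}_2^n} \big(P_t(0,x) - P_t(1,x)\big) = \frac{1}{2^n}\sum_{b \in \mathbb{Z}_2^n} \cos\big(2\hat f(b)\,t\big)$. -/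
open Matrix Complex Finset Kronecker

/-- Hamming weight of a vector in `(ZMod 2)^n`. -/
def wt {n : ℕ} (x : Fin n → ZMod 2) : ℕ := (Finset.univ.filter fun i => x i = 1).card

/-- Inner product modulo 2. -/
def dot {n : ℕ} (a x : Fin n → ZMod 2) : ZMod 2 := ∑ i, a i * x i

/-- Adjacency matrix of the hypercube `Q_n`: `A[x,y] = 1` iff `|x ⊕ y| = 1`. -/
def adjQ (n : ℕ) : Matrix (Fin n → ZMod 2) (Fin n → ZMod 2) ℂ :=
  Matrix.of fun x y => if wt (x + y) = 1 then 1 else 0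

/-- Continuous-time quantum walk `ψ_t = exp(-itA) ψ₀`. -/
noncomputable def walk {V : Type*} [Fintype V] [DecidableEq V]
    (A : Matrix V V ℂ) (ψ0 : V → ℂ) (t : ℝ) : V → ℂ :=
  (NormedSpace.exp ((-(t : ℂ) * Complex.I) • A)).mulVec ψ0


/-- Fourier transform over `(ZMod 2)^n`. -/
noncomputable def fhat {n : ℕ} (f : (Fin n → ZMod 2) → ℝ) (a : Fin n → ZMod 2) : ℝ :=
  ∑ x, f x * (-1 : ℝ) ^ (dot a x).val

/-- The `(ZMod 2)^n`-circulant matrix defined by `f`: `A_f[x,y] = f(x ⊕ y)`. -/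
def circ {n : ℕ} (f : (Fin n → ZMod 2) → ℝ) :
    Matrix (Fin n → ZMod 2) (Fin n → ZMod 2) ℂ :=
  Matrix.of fun x y => ((f (x + y) : ℝ) : ℂ)

/-- The Pauli matrix `X` (0 on the diagonal, 1 off the diagonal). -/
def Xmat : Matrix (ZMod 2) (ZMod 2) ℂ := Matrix.of fun i j => if i ≠ j then 1 else 0

/-- Adjacency matrix of the bunkbed graph `𝓑_n(A_f) = I ⊗ Q_n + X ⊗ A_f`. -/
noncomputable def bunkbed {n : ℕ} (f : (Fin n → ZMod 2) → ℝ) :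
    Matrix (ZMod 2 × (Fin n → ZMod 2)) (ZMod 2 × (Fin n → ZMod 2)) ℂ :=
  (1 : Matrix (ZMod 2) (ZMod 2) ℂ) ⊗ₖ (adjQ n) + Xmat ⊗ₖ (circ f)

/-! ### Auxiliary material -/

noncomputable def sgn (a : ZMod 2) : ℂ := (-1 : ℂ) ^ a.val

lemma zc (a : ZMod 2) : a = 0 ∨ a = 1 := by revert a; decide

lemma sgn_zero : sgn 0 = 1 := by norm_num [sgn]
lemma sgn_one : sgn 1 = -1 := by
  have : (1 : ZMod 2).val = 1 := rfl
  norm_num [sgn, this]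

lemma sgn_add (a b : ZMod 2) : sgn (a + b) = sgn a * sgn b := by
  rcases zc a with rfl | rfl <;> rcases zc b with rfl | rfl <;>
    norm_num [sgn_zero, sgn_one]
  rw [show (2 : ZMod 2) = 0 from by decide, sgn_zero]

lemma sgn_mul_self (a : ZMod 2) : sgn a * sgn a = 1 := by
  rcases zc a with rfl | rfl <;> norm_num [sgn_zero, sgn_one]

lemma sgn_ne {a b : ZMod 2} (h : a ≠ b) : sgn a = - sgn b := by
  rcases zc a with rfl | rfl <;> rcases zc b with rfl | rfl <;>
    simp_all [sgn_zero, sgn_one]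

lemma zmodsum (g : ZMod 2 → ℂ) : ∑ r, g r = g 0 + g 1 := by
  rw [show (univ : Finset (ZMod 2)) = {0, 1} from by decide]
  simp [Finset.sum_pair (show (0 : ZMod 2) ≠ 1 by decide)]

lemma zmod2_add_self (a : ZMod 2) : a + a = 0 := by revert a; decide

lemma V_add_self {n : ℕ} (x : Fin n → ZMod 2) : x + x = 0 := by
  funext i; exact zmod2_add_self (x i)

lemma dot_add_right {n : ℕ} (a x y : Fin n → ZMod 2) :
    dot a (x + y) = dot a x + dot a y := by
  simp [dot, mul_add, Finset.sum_add_distrib]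

lemma dot_comm {n : ℕ} (a x : Fin n → ZMod 2) : dot a x = dot x a := by
  simp [dot, mul_comm]

lemma dot_zero_left {n : ℕ} (x : Fin n → ZMod 2) : dot 0 x = 0 := by
  simp [dot]

lemma dot_zero_right {n : ℕ} (x : Fin n → ZMod 2) : dot x 0 = 0 := by
  rw [dot_comm]; exact dot_zero_left x

lemma char_sum {n : ℕ} (c : Fin n → ZMod 2) :
    ∑ x : Fin n → ZMod 2, sgn (dot c x) = if c = 0 then (2 : ℂ) ^ n else 0 := by
  split_ifs with h
  · subst h; simp [dot_zero_left, sgn_zero, Finset.card_univ]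
  · obtain ⟨i, hi⟩ : ∃ i, c i ≠ 0 := by
      by_contra hc; push_neg at hc; exact h (funext hc)
    have hci : c i = 1 := by rcases zc (c i) with h' | h' <;> simp_all
    have hdot : ∀ x, dot c (x + Pi.single i 1) = dot c x + 1 := by
      intro x
      rw [dot_add_right]
      congr 1
      rw [dot, Finset.sum_eq_single i]
      · simp [hci]
      · intro j _ hj; simp [Pi.single_apply, hj]
      · simp
    have hbij : Function.Bijective (fun x : Fin n → ZMod 2 => x + Pi.single i 1) := by
      constructor
      · exact add_left_injective _
      · intro a; exact ⟨a + Pi.single i 1, by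
          show a + Pi.single i 1 + Pi.single i 1 = a
          rw [add_assoc, V_add_self, add_zero]⟩
    have key := Fintype.sum_bijective _ hbij
      (fun x => sgn (dot c x)) (fun x => - sgn (dot c x)) ?_
    · have h2 : (∑ x : Fin n → ZMod 2, sgn (dot c x))
          = - ∑ x : Fin n → ZMod 2, sgn (dot c x) :=
        key.trans (Finset.sum_neg_distrib _)
      linear_combination h2 / 2
    · intro x
      simp only [hdot, sgn_add, sgn_one]
      ring

lemma zmod2_add_eq_zero {a b : ZMod 2} : a + b = 0 ↔ a = b := by revert a b; decide

lemma V_add_eq_zero {n : ℕ} {x y : Fin n → ZMod 2} : x + y = 0 ↔ x = y := by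
  constructor
  · intro h
    have h2 : x + y + y = y := by rw [h, zero_add]
    rwa [add_assoc, V_add_self, add_zero] at h2
  · rintro rfl; exact V_add_self x

noncomputable def Gmat (n : ℕ) :
    Matrix (ZMod 2 × (Fin n → ZMod 2)) (ZMod 2 × (Fin n → ZMod 2)) ℂ :=
  Matrix.of fun p q => sgn (p.1 * q.1) * sgn (dot p.2 q.2)

lemma zchar (c : ZMod 2) : ∑ r : ZMod 2, sgn (r * c) = if c = 0 then 2 else 0 := by
  rw [zmodsum]
  rcases zc c with rfl | rfl <;> simp [sgn_zero, sgn_one] <;> norm_num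

lemma Gmat_mul_self (n : ℕ) : Gmat n * Gmat n = ((2 : ℂ) ^ (n + 1)) • 1 := by
  ext p q
  rw [mul_apply, Fintype.sum_prod_type]
  have step : ∀ (r1 : ZMod 2) (r2 : Fin n → ZMod 2),
      Gmat n p (r1, r2) * Gmat n (r1, r2) q
        = sgn (r1 * (p.1 + q.1)) * sgn (dot (p.2 + q.2) r2) := by
    intro r1 r2
    show (sgn (p.1 * r1) * sgn (dot p.2 r2)) * (sgn (r1 * q.1) * sgn (dot r2 q.2)) = _
    rw [mul_mul_mul_comm, ← sgn_add, ← sgn_add]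
    congr 2
    · ring
    · rw [dot_comm p.2 r2, ← dot_add_right, dot_comm]
  simp_rw [step]
  rw [← Fintype.sum_mul_sum, zchar, char_sum]
  rw [Matrix.smul_apply, Matrix.one_apply]
  by_cases h : p = q
  · subst h
    rw [if_pos (zmod2_add_eq_zero.2 rfl), if_pos (V_add_eq_zero.2 rfl), if_pos rfl]
    simp [pow_succ]; ring
  · rw [if_neg h]
    rcases (show ¬(p.1 = q.1) ∨ ¬(p.2 = q.2) by
        by_contra hc; push_neg at hc; exact h (Prod.ext hc.1 hc.2)) with h1 | h1
    · rw [if_neg (fun hh => h1 (zmod2_add_eq_zero.1 hh))]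
      simp
    · rw [if_neg (fun hh => h1 (V_add_eq_zero.1 hh))]
      simp

lemma fhatC {n : ℕ} (f : (Fin n → ZMod 2) → ℝ) (b : Fin n → ZMod 2) :
    ((fhat f b : ℝ) : ℂ) = ∑ x, sgn (dot b x) * ((f x : ℝ) : ℂ) := by
  rw [fhat]
  push_cast
  refine Finset.sum_congr rfl fun x _ => ?_
  rw [sgn, mul_comm]

lemma sum_shift {n : ℕ} (f : (Fin n → ZMod 2) → ℝ) (b q2 : Fin n → ZMod 2) :
    ∑ x, sgn (dot b x) * ((f (x + q2) : ℝ) : ℂ)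
      = sgn (dot b q2) * ((fhat f b : ℝ) : ℂ) := by
  rw [fhatC, Finset.mul_sum]
  have hbij : Function.Bijective (fun x : Fin n → ZMod 2 => x + q2) := by
    constructor
    · exact add_left_injective _
    · intro a; exact ⟨a + q2, by
        show a + q2 + q2 = a
        rw [add_assoc, V_add_self, add_zero]⟩
  refine (Fintype.sum_bijective _ hbij
    (fun z => sgn (dot b q2) * (sgn (dot b z) * ((f z : ℝ) : ℂ)))
    (fun x => sgn (dot b x) * ((f (x + q2) : ℝ) : ℂ)) ?_).symm
  intro z
  show _ = sgn (dot b (z + q2)) * ((f (z + q2 + q2) : ℝ) : ℂ)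
  rw [add_assoc, V_add_self, add_zero, dot_add_right, sgn_add]
  ring

lemma Gmat_diag {n : ℕ} (f : (Fin n → ZMod 2) → ℝ) :
    Gmat n * (Xmat ⊗ₖ circ f)
      = Matrix.diagonal (fun p : ZMod 2 × (Fin n → ZMod 2) =>
          sgn p.1 * ((fhat f p.2 : ℝ) : ℂ)) * Gmat n := by
  ext p q
  rw [mul_apply, Fintype.sum_prod_type, Matrix.diagonal_mul]
  have step : ∀ (r1 : ZMod 2) (r2 : Fin n → ZMod 2),
      Gmat n p (r1, r2) * (Xmat ⊗ₖ circ f) (r1, r2) q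
        = (sgn (p.1 * r1) * (if r1 ≠ q.1 then 1 else 0))
          * (sgn (dot p.2 r2) * ((f (r2 + q.2) : ℝ) : ℂ)) := by
    intro r1 r2
    show (sgn (p.1 * r1) * sgn (dot p.2 r2))
        * ((if r1 ≠ q.1 then 1 else 0) * ((f (r2 + q.2) : ℝ) : ℂ)) = _
    ring
  simp_rw [step]
  rw [← Fintype.sum_mul_sum]
  have h1 : ∑ r1 : ZMod 2, sgn (p.1 * r1) * (if r1 ≠ q.1 then 1 else 0)
      = sgn (p.1 * q.1) * sgn p.1 := by
    rw [zmodsum]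
    rcases zc q.1 with hq | hq <;> rw [hq] <;>
      rcases zc p.1 with hp | hp <;> rw [hp] <;>
      norm_num [sgn_zero, sgn_one]
  rw [h1, sum_shift]
  show _ = sgn p.1 * ((fhat f p.2 : ℝ) : ℂ) * (sgn (p.1 * q.1) * sgn (dot p.2 q.2))
  ring

/-- Commutation of `(ZMod 2)^n`-circulant-like matrices. -/
lemma circlike_comm {n : ℕ} (F G : (Fin n → ZMod 2) → ℂ) :
    (Matrix.of fun x y => F (x + y)) * (Matrix.of fun x y => G (x + y))
      = (Matrix.of fun x y => G (x + y)) * (Matrix.of fun x y => F (x + y)) := by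
  ext x y
  rw [mul_apply, mul_apply]
  have hbij : Function.Bijective (fun z : Fin n → ZMod 2 => x + y + z) :=
    (Equiv.addLeft (x + y)).bijective
  refine Fintype.sum_bijective _ hbij _ _ ?_
  intro z
  show F (x + z) * G (z + y) = G (x + (x + y + z)) * F ((x + y + z) + y)
  have e1 : x + (x + y + z) = y + z := by
    rw [show x + (x + y + z) = (x + x) + (y + z) from by abel, V_add_self, zero_add]
  have e2 : (x + y + z) + y = x + z := by
    rw [show (x + y + z) + y = (y + y) + (x + z) from by abel, V_add_self, zero_add]
  rw [e1, e2, add_comm y z]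
  ring

noncomputable def Zdiag (n : ℕ) :
    Matrix (ZMod 2 × (Fin n → ZMod 2)) (ZMod 2 × (Fin n → ZMod 2)) ℂ :=
  Matrix.diagonal (fun p => sgn p.1)

lemma Zdiag_mul_self (n : ℕ) : Zdiag n * Zdiag n = 1 := by
  rw [Zdiag, Matrix.diagonal_mul_diagonal]
  have : (fun p : ZMod 2 × (Fin n → ZMod 2) => sgn p.1 * sgn p.1) = fun _ => 1 := by
    funext p; exact sgn_mul_self p.1
  rw [this, Matrix.diagonal_one]

lemma NM_comm {n : ℕ} (f : (Fin n → ZMod 2) → ℝ) :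
    ((1 : Matrix (ZMod 2) (ZMod 2) ℂ) ⊗ₖ adjQ n) * (Xmat ⊗ₖ circ f)
      = (Xmat ⊗ₖ circ f) * ((1 : Matrix (ZMod 2) (ZMod 2) ℂ) ⊗ₖ adjQ n) := by
  rw [← Matrix.mul_kronecker_mul, ← Matrix.mul_kronecker_mul, one_mul, mul_one]
  have h : adjQ n * circ f = circ f * adjQ n :=
    circlike_comm (fun z => if wt z = 1 then (1 : ℂ) else 0) (fun z => ((f z : ℝ) : ℂ))
  rw [h]

lemma NZ_comm {n : ℕ} :
    ((1 : Matrix (ZMod 2) (ZMod 2) ℂ) ⊗ₖ adjQ n) * Zdiag n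
      = Zdiag n * ((1 : Matrix (ZMod 2) (ZMod 2) ℂ) ⊗ₖ adjQ n) := by
  ext p q
  rw [Zdiag, Matrix.mul_diagonal, Matrix.diagonal_mul]
  by_cases h : p.1 = q.1
  · rw [show sgn q.1 = sgn p.1 from by rw [h], mul_comm]
  · rw [Matrix.kroneckerMap_apply, Matrix.one_apply_ne h, zero_mul, zero_mul, mul_zero]

lemma ZM_anticomm {n : ℕ} (f : (Fin n → ZMod 2) → ℝ) :
    Zdiag n * (Xmat ⊗ₖ circ f) = -((Xmat ⊗ₖ circ f) * Zdiag n) := by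
  ext p q
  rw [Zdiag, Matrix.neg_apply, Matrix.mul_diagonal, Matrix.diagonal_mul]
  by_cases h : p.1 = q.1
  · have hX : Xmat p.1 q.1 = 0 := by simp [Xmat, h]
    simp [Matrix.kroneckerMap_apply, hX]
  · rw [sgn_ne h]
    ring

lemma bunkbed_apply {n : ℕ} (f : (Fin n → ZMod 2) → ℝ)
    (p q : ZMod 2 × (Fin n → ZMod 2)) :
    bunkbed f p q = (if p.1 = q.1 then 1 else 0) * (if wt (p.2 + q.2) = 1 then 1 else 0)
      + (if p.1 ≠ q.1 then 1 else 0) * ((f (p.2 + q.2) : ℝ) : ℂ) := by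
  simp [bunkbed, Matrix.add_apply, Matrix.kroneckerMap_apply, Matrix.one_apply,
    adjQ, circ, Xmat]

lemma ite_star (P : Prop) [Decidable P] : star (if P then (1 : ℂ) else 0) = if P then 1 else 0 := by
  split <;> simp

lemma bunkbed_herm {n : ℕ} (f : (Fin n → ZMod 2) → ℝ) :
    (bunkbed f)ᴴ = bunkbed f := by
  ext p q
  rw [Matrix.conjTranspose_apply, bunkbed_apply, bunkbed_apply]
  rw [star_add, star_mul', star_mul', ite_star, ite_star, Complex.star_def,
    Complex.conj_ofReal]
  rw [add_comm q.2 p.2]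
  have h1 : (if q.1 = p.1 then (1 : ℂ) else 0) = (if p.1 = q.1 then 1 else 0) := by
    by_cases h : p.1 = q.1
    · rw [if_pos h, if_pos h.symm]
    · have h' : ¬ q.1 = p.1 := fun hh => h hh.symm
      rw [if_neg h, if_neg h']
  have h2 : (if q.1 ≠ p.1 then (1 : ℂ) else 0) = (if p.1 ≠ q.1 then 1 else 0) := by
    by_cases h : p.1 = q.1
    · have h' : ¬ q.1 ≠ p.1 := fun hh => hh h.symm
      rw [if_neg h', if_neg (fun hh : p.1 ≠ q.1 => hh h)]
    · have h' : ¬ q.1 = p.1 := fun hh => h hh.symm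
      rw [if_pos h', if_pos h]
  rw [h1, h2]
  rw [show (starRingEnd ℂ) (if p.1 ≠ q.1 then (1 : ℂ) else 0)
      = (if p.1 ≠ q.1 then 1 else 0) from by split <;> simp]

lemma exp_M {n : ℕ} (f : (Fin n → ZMod 2) → ℝ) (c : ℂ) :
    NormedSpace.exp (c • (Xmat ⊗ₖ circ f))
      = (((2 : ℂ) ^ (n + 1))⁻¹ • Gmat n)
        * (Matrix.diagonal fun p : ZMod 2 × (Fin n → ZMod 2) =>
            Complex.exp (c * (sgn p.1 * ((fhat f p.2 : ℝ) : ℂ)))) * Gmat n := by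
  have hcne : ((2 : ℂ) ^ (n + 1)) ≠ 0 := pow_ne_zero _ two_ne_zero
  have hGG := Gmat_mul_self n
  have hinvG : ((((2 : ℂ) ^ (n + 1))⁻¹ • Gmat n)) * Gmat n = 1 := by
    rw [Matrix.smul_mul, hGG, smul_smul, inv_mul_cancel₀ hcne, one_smul]
  have hGinv : Gmat n * ((((2 : ℂ) ^ (n + 1))⁻¹ • Gmat n)) = 1 := by
    rw [Matrix.mul_smul, hGG, smul_smul, inv_mul_cancel₀ hcne, one_smul]
  set Dg := Matrix.diagonal (fun p : ZMod 2 × (Fin n → ZMod 2) =>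
    sgn p.1 * ((fhat f p.2 : ℝ) : ℂ)) with hDg
  set GU : (Matrix (ZMod 2 × (Fin n → ZMod 2)) (ZMod 2 × (Fin n → ZMod 2)) ℂ)ˣ :=
    ⟨Gmat n, ((2 : ℂ) ^ (n + 1))⁻¹ • Gmat n, hGinv, hinvG⟩ with hGU
  have hM : Xmat ⊗ₖ circ f = (((2 : ℂ) ^ (n + 1))⁻¹ • Gmat n) * Dg * Gmat n := by
    calc Xmat ⊗ₖ circ f = 1 * (Xmat ⊗ₖ circ f) := (one_mul _).symm
      _ = ((((2 : ℂ) ^ (n + 1))⁻¹ • Gmat n) * Gmat n) * (Xmat ⊗ₖ circ f) := by rw [hinvG]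
      _ = (((2 : ℂ) ^ (n + 1))⁻¹ • Gmat n) * (Gmat n * (Xmat ⊗ₖ circ f)) := mul_assoc _ _ _
      _ = (((2 : ℂ) ^ (n + 1))⁻¹ • Gmat n) * (Dg * Gmat n) := by rw [Gmat_diag]
      _ = (((2 : ℂ) ^ (n + 1))⁻¹ • Gmat n) * Dg * Gmat n := (mul_assoc _ _ _).symm
  have hsM : c • (Xmat ⊗ₖ circ f)
      = (↑GU⁻¹ : Matrix _ _ ℂ) * (c • Dg) * (↑GU : Matrix _ _ ℂ) := by
    show c • (Xmat ⊗ₖ circ f) = (((2 : ℂ) ^ (n + 1))⁻¹ • Gmat n) * (c • Dg) * Gmat n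
    rw [hM]
    simp only [Matrix.smul_mul, Matrix.mul_smul, smul_smul]
  rw [hsM, Matrix.exp_units_conj' GU (c • Dg)]
  show (((2 : ℂ) ^ (n + 1))⁻¹ • Gmat n) * NormedSpace.exp (c • Dg) * Gmat n = _
  have hD : NormedSpace.exp (c • Dg)
      = Matrix.diagonal fun p : ZMod 2 × (Fin n → ZMod 2) =>
          Complex.exp (c * (sgn p.1 * ((fhat f p.2 : ℝ) : ℂ))) := by
    rw [hDg, ← Matrix.diagonal_smul, Matrix.exp_diagonal]
    have hfun : NormedSpace.exp
        (c • fun p : ZMod 2 × (Fin n → ZMod 2) => sgn p.1 * ((fhat f p.2 : ℝ) : ℂ))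
        = fun p : ZMod 2 × (Fin n → ZMod 2) =>
            Complex.exp (c * (sgn p.1 * ((fhat f p.2 : ℝ) : ℂ))) := by
      funext p
      rw [Pi.coe_exp, Pi.smul_apply, smul_eq_mul, ← Complex.exp_eq_exp_ℂ]
    rw [hfun]
  rw [hD]

lemma Zdiag_mul_apply {n : ℕ}
    (A : Matrix (ZMod 2 × (Fin n → ZMod 2)) (ZMod 2 × (Fin n → ZMod 2)) ℂ)
    (p q : ZMod 2 × (Fin n → ZMod 2)) :
    (Zdiag n * A) p q = sgn p.1 * A p q := by
  simp [Zdiag, Matrix.diagonal_mul]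

lemma exp_M_entry {n : ℕ} (f : (Fin n → ZMod 2) → ℝ) (c : ℂ) :
    NormedSpace.exp (c • (Xmat ⊗ₖ circ f))
        ((0 : ZMod 2), (0 : Fin n → ZMod 2)) ((0 : ZMod 2), (0 : Fin n → ZMod 2))
      = ((2 : ℂ) ^ (n + 1))⁻¹ * ∑ b : Fin n → ZMod 2,
          (Complex.exp (c * ((fhat f b : ℝ) : ℂ))
            + Complex.exp (c * (-((fhat f b : ℝ) : ℂ)))) := by
  rw [exp_M]
  rw [Matrix.smul_mul, Matrix.smul_mul, Matrix.smul_apply, smul_eq_mul]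
  congr 1
  rw [Matrix.mul_apply]
  have hG1 : ∀ p : ZMod 2 × (Fin n → ZMod 2),
      Gmat n ((0 : ZMod 2), (0 : Fin n → ZMod 2)) p = 1 := by
    intro p
    show sgn (0 * p.1) * sgn (dot 0 p.2) = 1
    rw [zero_mul, dot_zero_left, sgn_zero, one_mul]
  have hG2 : ∀ p : ZMod 2 × (Fin n → ZMod 2),
      Gmat n p ((0 : ZMod 2), (0 : Fin n → ZMod 2)) = 1 := by
    intro p
    show sgn (p.1 * 0) * sgn (dot p.2 0) = 1
    rw [mul_zero, dot_zero_right, sgn_zero, mul_one]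
  simp_rw [Matrix.mul_diagonal, hG1, hG2, one_mul, mul_one]
  rw [Fintype.sum_prod_type, zmodsum]
  rw [← Finset.sum_add_distrib]
  refine Finset.sum_congr rfl fun b _ => ?_
  rw [sgn_zero, sgn_one, one_mul, neg_one_mul]

/-- For the quantum walk on the bunkbed `𝓑_n(A_f)` started at `(0, 0_n)`, the
difference of the total probabilities on the two decks equals
`2^{-n} ∑_b cos(2 f̂(b) t)`. -/
theorem bunkbed_deck_probability_difference (n : ℕ) (hn : 1 ≤ n)
    (f : (Fin n → ZMod 2) → ℝ) (hBool : ∀ x, f x = 0 ∨ f x = 1) (t : ℝ) :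
    ∑ x : Fin n → ZMod 2,
        (‖walk (bunkbed f)
            (Pi.single ((0 : ZMod 2), (0 : Fin n → ZMod 2)) 1) t
            ((0 : ZMod 2), x)‖ ^ 2
          - ‖walk (bunkbed f)
            (Pi.single ((0 : ZMod 2), (0 : Fin n → ZMod 2)) 1) t
            ((1 : ZMod 2), x)‖ ^ 2)
      = (1 / 2 ^ n) * ∑ b : Fin n → ZMod 2, Real.cos (2 * fhat f b * t) := by
  classical
  set v0 : ZMod 2 × (Fin n → ZMod 2) := ((0 : ZMod 2), (0 : Fin n → ZMod 2)) with hv0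
  set a : ℂ := -(t : ℂ) * Complex.I with ha
  set N : Matrix (ZMod 2 × (Fin n → ZMod 2)) (ZMod 2 × (Fin n → ZMod 2)) ℂ :=
    (1 : Matrix (ZMod 2) (ZMod 2) ℂ) ⊗ₖ adjQ n with hN
  set Mx : Matrix (ZMod 2 × (Fin n → ZMod 2)) (ZMod 2 × (Fin n → ZMod 2)) ℂ :=
    Xmat ⊗ₖ circ f with hMx
  set Zd := Zdiag n with hZd
  set E := NormedSpace.exp (a • bunkbed f) with hE
  have hwalk : ∀ w, walk (bunkbed f) (Pi.single v0 1) t w = E w v0 := by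
    intro w
    simp [hE, ha, walk, Matrix.mulVec_single]
  simp_rw [hwalk]
  -- commuting facts
  have hB : bunkbed f = N + Mx := rfl
  have hNMmul : N * Mx = Mx * N := NM_comm f
  have hcomm : ∀ c d : ℂ, (c • N) * (d • Mx) = (d • Mx) * (c • N) := by
    intro c d
    simp only [Matrix.smul_mul, Matrix.mul_smul, smul_smul]
    rw [hNMmul, mul_comm c d]
  have hsplit : ∀ c : ℂ, NormedSpace.exp (c • bunkbed f)
      = NormedSpace.exp (c • N) * NormedSpace.exp (c • Mx) := by
    intro c
    rw [hB, smul_add]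
    exact Matrix.exp_add_of_commute _ _ (hcomm c c)
  have hZZ : Zd * Zd = 1 := Zdiag_mul_self n
  set ZU : (Matrix (ZMod 2 × (Fin n → ZMod 2)) (ZMod 2 × (Fin n → ZMod 2)) ℂ)ˣ :=
    ⟨Zd, Zd, hZZ, hZZ⟩ with hZU
  have hconjM : Zd * (a • Mx) * Zd = (-a) • Mx := by
    rw [Matrix.mul_smul, Matrix.smul_mul, ZM_anticomm f, neg_mul, mul_assoc, hZZ,
      mul_one, smul_neg, ← neg_smul]
  have hexpZ : NormedSpace.exp ((-a) • Mx) = Zd * NormedSpace.exp (a • Mx) * Zd := by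
    rw [← hconjM]
    exact Matrix.exp_units_conj ZU (a • Mx)
  have hswap : NormedSpace.exp ((-a) • Mx) * Zd = Zd * NormedSpace.exp (a • Mx) := by
    rw [hexpZ, mul_assoc, hZZ, mul_one]
  have hZN : Commute Zd (a • N) := by
    show Zd * (a • N) = (a • N) * Zd
    rw [Matrix.mul_smul, Matrix.smul_mul, NZ_comm]
  have hNZe : Zd * NormedSpace.exp (a • N) = NormedSpace.exp (a • N) * Zd :=
    hZN.exp_right.eq
  have hED : Commute (NormedSpace.exp (a • Mx)) (NormedSpace.exp (a • N)) :=
    Commute.exp (show Commute (a • Mx) (a • N) from (hcomm a a).symm)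
  have hcNN : Commute ((-a) • N) (a • N) := by
    show ((-a) • N) * (a • N) = (a • N) * ((-a) • N)
    simp only [Matrix.smul_mul, Matrix.mul_smul, smul_smul]
    rw [mul_comm]
  have hcancel : NormedSpace.exp ((-a) • N) * NormedSpace.exp (a • N) = 1 := by
    rw [← Matrix.exp_add_of_commute _ _ hcNN, ← add_smul, neg_add_cancel, zero_smul,
      NormedSpace.exp_zero]
  have hEE : NormedSpace.exp ((a + a) • Mx)
      = NormedSpace.exp (a • Mx) * NormedSpace.exp (a • Mx) := by
    rw [add_smul]
    exact Matrix.exp_add_of_commute _ _ (Commute.refl _)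
  have hstar_a : star a = -a := by
    rw [ha]
    simp [Complex.star_def, _root_.map_mul, _root_.map_neg, Complex.conj_I, Complex.conj_ofReal]
  have hEH : (NormedSpace.exp (a • bunkbed f))ᴴ
      = NormedSpace.exp ((-a) • bunkbed f) := by
    rw [← Matrix.exp_conjTranspose]
    congr 1
    rw [Matrix.conjTranspose_smul, bunkbed_herm, hstar_a]
  -- step A
  have habs2 : ∀ z : ℂ, ((‖z‖ : ℝ) : ℂ) ^ 2 = (starRingEnd ℂ) z * z := by
    intro z
    rw [← Complex.ofReal_pow, Complex.sq_norm, ← Complex.mul_conj]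
    ring
  have hconjE : ∀ w, NormedSpace.exp ((-a) • bunkbed f) v0 w = (starRingEnd ℂ) (E w v0) := by
    intro w
    rw [← hEH, Matrix.conjTranspose_apply, Complex.star_def]
  have stepA : ((∑ x : Fin n → ZMod 2,
        (‖E ((0 : ZMod 2), x) v0‖ ^ 2
          - ‖E ((1 : ZMod 2), x) v0‖ ^ 2) : ℝ) : ℂ)
      = (NormedSpace.exp ((-a) • bunkbed f) * (Zd * E)) v0 v0 := by
    rw [Matrix.mul_apply]
    have hterm : ∀ w : ZMod 2 × (Fin n → ZMod 2),
        NormedSpace.exp ((-a) • bunkbed f) v0 w * (Zd * E) w v0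
          = (starRingEnd ℂ) (E w v0) * (sgn w.1 * E w v0) := by
      intro w
      rw [hconjE, hZd, Zdiag_mul_apply]
    simp_rw [hterm]
    rw [Fintype.sum_prod_type, zmodsum]
    push_cast
    simp_rw [habs2]
    rw [Finset.sum_sub_distrib, sub_eq_add_neg, ← Finset.sum_neg_distrib]
    congr 1
    · refine Finset.sum_congr rfl fun x _ => ?_
      rw [sgn_zero, one_mul]
    · refine Finset.sum_congr rfl fun x _ => ?_
      rw [sgn_one, neg_one_mul, mul_neg]
  -- step C
  have stepC : NormedSpace.exp ((-a) • bunkbed f) * (Zd * E)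
      = Zd * NormedSpace.exp ((a + a) • Mx) := by
    rw [hE, hsplit a, hsplit (-a)]
    rw [mul_assoc (NormedSpace.exp ((-a) • N))]
    rw [← mul_assoc (NormedSpace.exp ((-a) • Mx)) Zd]
    rw [hswap]
    rw [mul_assoc Zd (NormedSpace.exp (a • Mx))]
    rw [← mul_assoc (NormedSpace.exp (a • Mx)) (NormedSpace.exp (a • N))]
    rw [hED.eq]
    rw [mul_assoc (NormedSpace.exp (a • N)) (NormedSpace.exp (a • Mx))]
    rw [← hEE]
    rw [← mul_assoc Zd (NormedSpace.exp (a • N))]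
    rw [hNZe]
    rw [mul_assoc (NormedSpace.exp (a • N)) Zd]
    rw [← mul_assoc (NormedSpace.exp ((-a) • N))]
    rw [hcancel, one_mul]
  -- final computation
  have hterm2 : ∀ b : Fin n → ZMod 2,
      Complex.exp ((a + a) * ((fhat f b : ℝ) : ℂ))
          + Complex.exp ((a + a) * (-((fhat f b : ℝ) : ℂ)))
        = 2 * ((Real.cos (2 * fhat f b * t) : ℝ) : ℂ) := by
    intro b
    have e1 : (a + a) * ((fhat f b : ℝ) : ℂ)
        = ((-(2 * fhat f b * t) : ℝ) : ℂ) * Complex.I := by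
      rw [ha]; push_cast; ring
    have e2 : (a + a) * (-((fhat f b : ℝ) : ℂ))
        = (((2 * fhat f b * t) : ℝ) : ℂ) * Complex.I := by
      rw [ha]; push_cast; ring
    rw [e1, e2, Complex.exp_mul_I, Complex.exp_mul_I]
    rw [Complex.ofReal_neg, Complex.cos_neg, Complex.sin_neg, ← Complex.ofReal_cos]
    ring
  have h2n : ((2 : ℂ) ^ n) ≠ 0 := pow_ne_zero _ two_ne_zero
  have final : ((∑ x : Fin n → ZMod 2,
        (‖E ((0 : ZMod 2), x) v0‖ ^ 2
          - ‖E ((1 : ZMod 2), x) v0‖ ^ 2) : ℝ) : ℂ)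
      = (((1 / 2 ^ n) * ∑ b : Fin n → ZMod 2, Real.cos (2 * fhat f b * t) : ℝ) : ℂ) := by
    rw [stepA, stepC, hZd, Zdiag_mul_apply]
    show sgn (0 : ZMod 2) * _ = _
    rw [sgn_zero, one_mul, hMx, exp_M_entry]
    have : ∑ b : Fin n → ZMod 2,
        (Complex.exp ((a + a) * ((fhat f b : ℝ) : ℂ))
          + Complex.exp ((a + a) * (-((fhat f b : ℝ) : ℂ))))
        = ∑ b : Fin n → ZMod 2, 2 * ((Real.cos (2 * fhat f b * t) : ℝ) : ℂ) :=
      Finset.sum_congr rfl fun b _ => hterm2 b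
    rw [this, ← Finset.mul_sum]
    push_cast
    rw [pow_succ]
    field_simp
    ring_nf
    exact Finset.sum_congr rfl fun x _ => by ring_nf
  exact_mod_cast final
end

section
/- For $n \ge 2$, the continuous-time quantum walk on the join $Q_n + Q_n$ of two hypercubes (the graph on $\mathbb{Z}_2 \times \mathbb{Z}_2^n$ consisting of two copies of $Q_n$ together with every edge between a vertex of one copy and a vertex of the other, with adjacency matrix $I_2 \otimes A_{Q_n} + X \otimes J$ where $J$ is the $2^n \times 2^n$ all-ones matrix), starting at vertex $(0, 0_n)$, is not instantaneous uniform mixing at any time: for every $t \in \mathbb{R}$ there exists a vertex $v$ with $|\psi_t(v)|^2 \neq 2^{-(n+1)}$. -/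
open Matrix Complex Finset Kronecker

/-- Adjacency matrix of the join `Q_n + Q_n` of two hypercubes:
`I ⊗ Q_n + X ⊗ J` with `J` the all-ones matrix. -/
def joinQQ (n : ℕ) :
    Matrix (ZMod 2 × (Fin n → ZMod 2)) (ZMod 2 × (Fin n → ZMod 2)) ℂ :=
  (1 : Matrix (ZMod 2) (ZMod 2) ℂ) ⊗ₖ (adjQ n)
    + Xmat ⊗ₖ (Matrix.of fun (_ _ : Fin n → ZMod 2) => (1 : ℂ))

/-! ### Auxiliary lemmas -/

open Nat in
/-- If `v` is an eigenvector of `A` with eigenvalue `c`, it is an eigenvector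
of `exp A` with eigenvalue `exp c`. -/
lemma exp_mulVec_eigen {m : Type*} [Fintype m] [DecidableEq m]
    (A : Matrix m m ℂ) (c : ℂ) (v : m → ℂ)
    (h : A.mulVec v = c • v) :
    (NormedSpace.exp A).mulVec v = Complex.exp c • v := by
  letI : NormedRing (Matrix m m ℂ) := Matrix.linftyOpNormedRing
  letI : NormedAlgebra ℂ (Matrix m m ℂ) := Matrix.linftyOpNormedAlgebra
  have hsum : Summable (fun k : ℕ => (k !⁻¹ : ℂ) • A ^ k) := NormedSpace.expSeries_summable' A
  have hpow : ∀ k : ℕ, (A ^ k).mulVec v = c ^ k • v := by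
    intro k
    induction k with
    | zero => simp
    | succ k ih =>
      rw [pow_succ, ← Matrix.mulVec_mulVec, h, Matrix.mulVec_smul, ih, smul_smul,
        pow_succ, mul_comm]
  let L : Matrix m m ℂ →ₗ[ℂ] (m → ℂ) :=
    { toFun := fun M => M.mulVec v
      map_add' := fun M N => Matrix.add_mulVec M N v
      map_smul' := fun r M => Matrix.smul_mulVec r M v }
  have key : (NormedSpace.exp A).mulVec v = ∑' k : ℕ, (k !⁻¹ : ℂ) • ((A ^ k).mulVec v) := by
    have h2 := (hsum.hasSum.mapL (LinearMap.toContinuousLinearMap L)).tsum_eq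
    simp only [LinearMap.coe_toContinuousLinearMap', L, LinearMap.coe_mk, AddHom.coe_mk] at h2
    rw [NormedSpace.exp_eq_tsum (𝕂 := ℂ)]
    beta_reduce
    rw [← h2]
    congr 1
    funext k
    rw [Matrix.smul_mulVec]
  rw [key]
  have hsc : Summable (fun k : ℕ => (k !⁻¹ : ℂ) • c ^ k) := NormedSpace.expSeries_summable' c
  calc ∑' k : ℕ, (k !⁻¹ : ℂ) • ((A ^ k).mulVec v)
      = ∑' k : ℕ, ((k !⁻¹ : ℂ) * c ^ k) • v := by
        congr 1; funext k; rw [hpow k, smul_smul]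
    _ = (∑' k : ℕ, (k !⁻¹ : ℂ) * c ^ k) • v := by
        exact Summable.tsum_smul_const (by simpa [smul_eq_mul] using hsc) v
    _ = Complex.exp c • v := by
        congr 1
        rw [Complex.exp_eq_exp_ℂ, NormedSpace.exp_eq_tsum (𝕂 := ℂ)]
        simp [smul_eq_mul]

/-- character values -/
noncomputable def ch {n : ℕ} (a x : Fin n → ZMod 2) : ℂ := if dot a x = 0 then 1 else -1

lemma zmod2_cases (u : ZMod 2) : u = 0 ∨ u = 1 := by revert u; decide

lemma dot_add {n : ℕ} (a x z : Fin n → ZMod 2) : dot a (x + z) = dot a x + dot a z := by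
  simp [dot, mul_add, Finset.sum_add_distrib]

lemma ch_add {n : ℕ} (a x z : Fin n → ZMod 2) : ch a (x + z) = ch a x * ch a z := by
  unfold ch
  rw [dot_add]
  rcases zmod2_cases (dot a x) with h1 | h1 <;> rcases zmod2_cases (dot a z) with h2 | h2 <;>
    simp [h1, h2] <;> decide

lemma ch_zero {n : ℕ} (x : Fin n → ZMod 2) : ch 0 x = 1 := by simp [ch, dot]

lemma ch_comm {n : ℕ} (a x : Fin n → ZMod 2) : ch a x = ch x a := by
  unfold ch dot
  rw [show (∑ i, a i * x i) = ∑ i, x i * a i from Finset.sum_congr rfl fun i _ => mul_comm _ _]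

lemma sum_ch_eq_zero {n : ℕ} {a : Fin n → ZMod 2} (ha : a ≠ 0) :
    ∑ y : Fin n → ZMod 2, ch a y = 0 := by
  obtain ⟨i, hi⟩ := Function.ne_iff.mp ha
  have hi0 : a i ≠ 0 := by simpa using hi
  have hi1 : a i = 1 := by
    rcases zmod2_cases (a i) with h | h
    · exact absurd h hi0
    · exact h
  set e : Fin n → ZMod 2 := fun j => if j = i then 1 else 0 with he
  have hde : dot a e = 1 := by
    simp only [dot, he, mul_ite, mul_one, mul_zero]
    rw [Finset.sum_ite_eq' Finset.univ i a]
    simp [hi1]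
  have hce : ch a e = -1 := by simp [ch, hde]
  have key : ∑ y : Fin n → ZMod 2, ch a y = ∑ y : Fin n → ZMod 2, -ch a y := by
    refine Fintype.sum_equiv (Equiv.addRight e) _ _ fun y => ?_
    simp only [Equiv.coe_addRight]
    rw [ch_add, hce]
    ring
  rw [Finset.sum_neg_distrib] at key
  linear_combination key / 2

/-- the eigenvalue of `Q_n` on character `a`, as an integer -/
def lam {n : ℕ} (a : Fin n → ZMod 2) : ℤ :=
  ∑ z ∈ Finset.univ.filter (fun z : Fin n → ZMod 2 => wt z = 1),
    (if dot a z = 0 then (1 : ℤ) else -1)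

lemma lam_eq_sum_ch {n : ℕ} (a : Fin n → ZMod 2) :
    ((lam a : ℤ) : ℂ) = ∑ z ∈ Finset.univ.filter (fun z : Fin n → ZMod 2 => wt z = 1), ch a z := by
  unfold lam ch
  push_cast [apply_ite (fun x : ℤ => (x : ℂ))]
  rfl

lemma add_add_self {n : ℕ} (x y : Fin n → ZMod 2) : x + (x + y) = y := by
  rw [← add_assoc]
  have : x + x = 0 := by
    funext j
    have := zmod2_cases (x j)
    rcases this with h | h <;> simp [h] <;> decide
  rw [this, zero_add]

lemma Qrow {n : ℕ} (a x : Fin n → ZMod 2) :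
    ∑ y : Fin n → ZMod 2, adjQ n x y * ch a y = ((lam a : ℤ) : ℂ) * ch a x := by
  have step1 : ∑ y : Fin n → ZMod 2, adjQ n x y * ch a y
      = ∑ y : Fin n → ZMod 2, (if wt y = 1 then ch a (x + y) else 0) := by
    refine Fintype.sum_equiv (Equiv.addLeft x) _ _ fun y => ?_
    simp only [Equiv.coe_addLeft, adjQ, Matrix.of_apply, ite_mul, one_mul, zero_mul]
    rw [add_add_self]
    exact if_congr Iff.rfl rfl rfl
  rw [step1, lam_eq_sum_ch, ← Finset.sum_filter, Finset.sum_mul]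
  refine Finset.sum_congr rfl fun z _ => ?_
  rw [ch_add, mul_comm]

lemma sum_zmod2 (f : ZMod 2 → ℂ) : ∑ δ : ZMod 2, f δ = f 0 + f 1 := by
  rw [show (Finset.univ : Finset (ZMod 2)) = {0, 1} from rfl]
  rw [Finset.sum_pair (by decide)]

lemma card_vq (n : ℕ) : (Fintype.card (Fin n → ZMod 2) : ℂ) = 2 ^ n := by
  simp [Fintype.card_fun]

/-- mulVec of joinQQ on a product-form vector -/
lemma mulVec_split {n : ℕ} (g : ZMod 2 → ℂ) (h : (Fin n → ZMod 2) → ℂ)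
    (ε : ZMod 2) (x : Fin n → ZMod 2) :
    (joinQQ n).mulVec (fun p => g p.1 * h p.2) (ε, x) =
      g ε * (∑ y, adjQ n x y * h y) + (g 0 + g 1 - g ε) * ∑ y, h y := by
  simp only [Matrix.mulVec, dotProduct]
  rw [Fintype.sum_prod_type]
  have hterm : ∀ δ : ZMod 2, ∀ y : Fin n → ZMod 2,
      joinQQ n (ε, x) (δ, y) * ((fun p : ZMod 2 × (Fin n → ZMod 2) => g p.1 * h p.2) (δ, y))
      = (if ε = δ then 1 else 0) * g δ * (adjQ n x y * h y)
        + (if ε = δ then 0 else 1) * g δ * h y := by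
    intro δ y
    simp only [joinQQ, Xmat, Matrix.add_apply, Matrix.kroneckerMap_apply, Matrix.of_apply,
      Matrix.one_apply, ne_eq, ite_not, mul_one]
    ring
  calc ∑ δ : ZMod 2, ∑ y, joinQQ n (ε, x) (δ, y) * (g δ * h y)
      = ∑ δ : ZMod 2, ((if ε = δ then 1 else 0) * g δ * (∑ y, adjQ n x y * h y)
          + (if ε = δ then 0 else 1) * g δ * (∑ y, h y)) := by
        refine Finset.sum_congr rfl fun δ _ => ?_
        rw [Finset.mul_sum, Finset.mul_sum, ← Finset.sum_add_distrib]
        exact Finset.sum_congr rfl fun y _ => hterm δ y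
    _ = g ε * (∑ y, adjQ n x y * h y) + (g 0 + g 1 - g ε) * ∑ y, h y := by
        rw [sum_zmod2]
        rcases zmod2_cases ε with hε | hε <;> subst hε <;>
          simp [show ((0 : ZMod 2) = 1) = False from by simp,
            show ((1 : ZMod 2) = 0) = False from by simp] <;> ring

noncomputable def chv {n : ℕ} (a : Fin n → ZMod 2) : ZMod 2 × (Fin n → ZMod 2) → ℂ :=
  fun p => (if p.1 = 0 then (1 : ℂ) else 0) * ch a p.2

noncomputable def wpv (n : ℕ) : ZMod 2 × (Fin n → ZMod 2) → ℂ :=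
  fun p => (1 : ℂ) * ch 0 p.2

noncomputable def wmv (n : ℕ) : ZMod 2 × (Fin n → ZMod 2) → ℂ :=
  fun p => (if p.1 = 0 then (1 : ℂ) else -1) * ch 0 p.2

lemma sum_ch_all {n : ℕ} : ∑ y : Fin n → ZMod 2, ch 0 y = 2 ^ n := by
  simp only [ch_zero]
  rw [Finset.sum_const, Finset.card_univ, nsmul_eq_mul, mul_one, ← card_vq n]

lemma eig_chv {n : ℕ} {a : Fin n → ZMod 2} (ha : a ≠ 0) :
    (joinQQ n).mulVec (chv a) = ((lam a : ℤ) : ℂ) • chv a := by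
  funext p
  obtain ⟨ε, x⟩ := p
  have H := mulVec_split (fun δ : ZMod 2 => if δ = 0 then (1 : ℂ) else 0) (ch a) ε x
  simp only [] at H
  rw [show (joinQQ n).mulVec (chv a) (ε, x)
      = (joinQQ n).mulVec (fun p => (if p.1 = 0 then (1 : ℂ) else 0) * ch a p.2) (ε, x) from rfl,
    H, Qrow, sum_ch_eq_zero ha]
  simp only [chv, Pi.smul_apply, smul_eq_mul]
  ring

lemma eig_wpv (n : ℕ) :
    (joinQQ n).mulVec (wpv n) = (((lam (0 : Fin n → ZMod 2) : ℤ) : ℂ) + 2 ^ n) • wpv n := by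
  funext p
  obtain ⟨ε, x⟩ := p
  have H := mulVec_split (fun _ : ZMod 2 => (1 : ℂ)) (ch 0) ε x
  rw [show (joinQQ n).mulVec (wpv n) (ε, x)
      = (joinQQ n).mulVec (fun p => (1 : ℂ) * ch 0 p.2) (ε, x) from rfl,
    H, Qrow, sum_ch_all]
  simp only [wpv, Pi.smul_apply, smul_eq_mul, ch_zero]
  ring

lemma eig_wmv (n : ℕ) :
    (joinQQ n).mulVec (wmv n) = (((lam (0 : Fin n → ZMod 2) : ℤ) : ℂ) - 2 ^ n) • wmv n := by
  funext p
  obtain ⟨ε, x⟩ := p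
  have H := mulVec_split (fun δ : ZMod 2 => if δ = 0 then (1 : ℂ) else -1) (ch 0) ε x
  simp only [] at H
  rw [show (joinQQ n).mulVec (wmv n) (ε, x)
      = (joinQQ n).mulVec (fun p => (if p.1 = 0 then (1 : ℂ) else -1) * ch 0 p.2) (ε, x) from rfl,
    H, Qrow, sum_ch_all]
  simp only [wmv, Pi.smul_apply, smul_eq_mul, ch_zero,
    show ((0 : ZMod 2) = 0) = True from by simp, show ((1 : ZMod 2) = 0) = False from by simp,
    if_true, if_false]
  ring

lemma chv_zero_eq {n : ℕ} : (chv (0 : Fin n → ZMod 2)) = (2 : ℂ)⁻¹ • (wpv n + wmv n) := by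
  funext p
  obtain ⟨ε, x⟩ := p
  simp only [chv, wpv, wmv, Pi.smul_apply, Pi.add_apply, smul_eq_mul, ch_zero]
  rcases zmod2_cases ε with h | h <;> subst h <;> norm_num

lemma psi0_eq (n : ℕ) :
    (Pi.single ((0 : ZMod 2), (0 : Fin n → ZMod 2)) 1 : ZMod 2 × (Fin n → ZMod 2) → ℂ)
      = ((2 : ℂ) ^ n)⁻¹ • ∑ a : Fin n → ZMod 2, chv a := by
  funext p
  obtain ⟨ε, x⟩ := p
  have h2n : ((2 : ℂ) ^ n) ≠ 0 := pow_ne_zero n two_ne_zero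
  simp only [Pi.smul_apply, Finset.sum_apply, smul_eq_mul, chv]
  rcases zmod2_cases ε with h | h <;> subst h
  · by_cases hx : x = 0
    · subst hx
      rw [Pi.single_eq_same]
      simp only [if_true, one_mul, show ∀ a : Fin n → ZMod 2, ch a 0 = 1 from
        fun a => by rw [ch_comm]; exact ch_zero a]
      rw [Finset.sum_const, Finset.card_univ, nsmul_eq_mul, mul_one, ← card_vq n]
      field_simp
    · rw [Pi.single_eq_of_ne (by simp [hx])]
      have : ∑ a : Fin n → ZMod 2, (if (0 : ZMod 2) = 0 then (1:ℂ) else 0) * ch a x = 0 := by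
        simp only [if_true, one_mul]
        have : ∑ a : Fin n → ZMod 2, ch a x = ∑ a : Fin n → ZMod 2, ch x a :=
          Finset.sum_congr rfl fun a _ => ch_comm a x
        rw [this, sum_ch_eq_zero hx]
      rw [this, mul_zero]
  · rw [Pi.single_eq_of_ne (by simp)]
    simp

/-- For `n ≥ 2`, the quantum walk on the join of two hypercubes `Q_n + Q_n`
starting at `(0, 0_n)` is never instantaneous uniform mixing. -/
theorem join_of_hypercubes_not_uniform_mixing (n : ℕ) (hn : 2 ≤ n) :
    ∀ t : ℝ, ∃ v : ZMod 2 × (Fin n → ZMod 2),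
      ‖walk (joinQQ n)
        (Pi.single ((0 : ZMod 2), (0 : Fin n → ZMod 2)) 1) t v‖ ^ 2
        ≠ 1 / 2 ^ (n + 1) := by
  intro t
  refine ⟨((1 : ZMod 2), (0 : Fin n → ZMod 2)), ?_⟩
  set s : ℂ := -(t : ℂ) * Complex.I with hs
  set E := NormedSpace.exp (s • joinQQ n) with hE
  set p1 : ZMod 2 × (Fin n → ZMod 2) := ((1 : ZMod 2), (0 : Fin n → ZMod 2)) with hp1
  set l0 : ℂ := ((lam (0 : Fin n → ZMod 2) : ℤ) : ℂ) with hl0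
  set Ep : ℂ := Complex.exp (s * (l0 + 2 ^ n)) with hEp
  set Em : ℂ := Complex.exp (s * (l0 - 2 ^ n)) with hEm
  -- eigenvector facts for the scaled matrix
  have hEwp : E.mulVec (wpv n) = Ep • wpv n := by
    refine exp_mulVec_eigen _ _ _ ?_
    rw [Matrix.smul_mulVec, eig_wpv n, smul_smul]
  have hEwm : E.mulVec (wmv n) = Em • wmv n := by
    refine exp_mulVec_eigen _ _ _ ?_
    rw [Matrix.smul_mulVec, eig_wmv n, smul_smul]
  have hEchv : ∀ a : Fin n → ZMod 2, a ≠ 0 →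
      E.mulVec (chv a) = Complex.exp (s * ((lam a : ℤ) : ℂ)) • chv a := by
    intro a ha
    refine exp_mulVec_eigen _ _ _ ?_
    rw [Matrix.smul_mulVec, eig_chv ha, smul_smul]
  -- compute the walk value at p1
  have hval : walk (joinQQ n) (Pi.single ((0 : ZMod 2), (0 : Fin n → ZMod 2)) 1) t p1
      = ((2 : ℂ) ^ n)⁻¹ * ((2 : ℂ)⁻¹ * (Ep - Em)) := by
    have hw : walk (joinQQ n) (Pi.single ((0 : ZMod 2), (0 : Fin n → ZMod 2)) 1) t
        = E.mulVec (Pi.single ((0 : ZMod 2), (0 : Fin n → ZMod 2)) 1) := rfl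
    rw [hw, psi0_eq n, Matrix.mulVec_smul]
    have hsum : E.mulVec (∑ a : Fin n → ZMod 2, chv a)
        = ∑ a : Fin n → ZMod 2, E.mulVec (chv a) := by
      rw [show E.mulVec (∑ a : Fin n → ZMod 2, chv a)
          = E.mulVecLin (∑ a : Fin n → ZMod 2, chv a) from rfl, map_sum]
      simp only [Matrix.mulVecLin_apply]
    rw [hsum]
    simp only [Pi.smul_apply, Finset.sum_apply, smul_eq_mul]
    congr 1
    rw [Finset.sum_eq_single (0 : Fin n → ZMod 2)]
    · -- main term
      rw [chv_zero_eq, Matrix.mulVec_smul, Matrix.mulVec_add, hEwp, hEwm]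
      simp only [Pi.smul_apply, Pi.add_apply, smul_eq_mul, wpv, wmv, ch_zero, hp1]
      norm_num [show ((1 : ZMod 2) = 0) = False from by simp]
      ring
    · intro a _ ha
      rw [hEchv a ha]
      simp [chv, hp1, show ((1 : ZMod 2) = 0) = False from by simp]
    · intro h
      exact absurd (Finset.mem_univ _) h
  rw [hval]
  -- bound the modulus
  have habsim : ∀ c : ℝ, ‖Complex.exp (s * (c : ℂ))‖ = 1 := by
    intro c
    rw [show s * (c : ℂ) = ((-(t * c) : ℝ) : ℂ) * Complex.I from by rw [hs]; push_cast; ring]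
    rw [Complex.norm_exp]
    simp
  have habsEp : ‖Ep‖ = 1 := by
    rw [hEp, show l0 + 2 ^ n = ((((lam (0 : Fin n → ZMod 2) : ℤ) : ℝ) + 2 ^ n : ℝ) : ℂ) from by
      rw [hl0]; push_cast; ring]
    exact habsim _
  have habsEm : ‖Em‖ = 1 := by
    rw [hEm, show l0 - 2 ^ n = ((((lam (0 : Fin n → ZMod 2) : ℤ) : ℝ) - 2 ^ n : ℝ) : ℂ) from by
      rw [hl0]; push_cast; ring]
    exact habsim _
  have hbound : ‖((2 : ℂ) ^ n)⁻¹ * ((2 : ℂ)⁻¹ * (Ep - Em))‖ ≤ ((2 : ℝ) ^ n)⁻¹ := by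
    rw [norm_mul, norm_mul]
    have h1 : ‖((2 : ℂ) ^ n)⁻¹‖ = ((2 : ℝ) ^ n)⁻¹ := by
      rw [norm_inv, norm_pow]
      norm_num
    have h2 : ‖(2 : ℂ)⁻¹‖ = (2 : ℝ)⁻¹ := by
      rw [norm_inv]
      norm_num
    have h3 : ‖Ep - Em‖ ≤ 2 := by
      calc ‖Ep - Em‖ ≤ ‖Ep‖ + ‖Em‖ := by
            rw [sub_eq_add_neg]
            calc ‖Ep + -Em‖ ≤ ‖Ep‖ + ‖-Em‖ :=
                  norm_add_le Ep (-Em)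
              _ = ‖Ep‖ + ‖Em‖ := by rw [norm_neg]
        _ = 2 := by rw [habsEp, habsEm]; norm_num
    rw [h1, h2]
    calc ((2 : ℝ) ^ n)⁻¹ * ((2 : ℝ)⁻¹ * ‖Ep - Em‖)
        ≤ ((2 : ℝ) ^ n)⁻¹ * ((2 : ℝ)⁻¹ * 2) := by
          apply mul_le_mul_of_nonneg_left _ (by positivity)
          apply mul_le_mul_of_nonneg_left h3 (by positivity)
      _ = ((2 : ℝ) ^ n)⁻¹ := by norm_num
  -- conclude
  have h1 : ‖((2 : ℂ) ^ n)⁻¹ * ((2 : ℂ)⁻¹ * (Ep - Em))‖ ^ 2 ≤ (((2 : ℝ) ^ n)⁻¹) ^ 2 :=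
    pow_le_pow_left₀ (norm_nonneg _) hbound 2
  have h2 : (((2 : ℝ) ^ n)⁻¹) ^ 2 < 1 / 2 ^ (n + 1) := by
    rw [← inv_pow, ← pow_mul, one_div, inv_pow]
    apply inv_strictAnti₀
    · positivity
    · exact pow_lt_pow_right₀ one_lt_two (by omega)
  exact ne_of_lt (lt_of_le_of_lt h1 h2)
end
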